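/- arXiv:2007.11516 — 2 statements merged into one kernel-verified Lean document; each statement's English description precedes it below -/
import Mathlib

section
/- Fix v ≥ 0, M ≥ 1 (integer), σ > 0, and l_k > 0, p_k ≥ 0 for k = 1,…,K. Suppose v* ≥ 0 satisfies the fixed-point equation e^{v*} = 1 + ∑_{k} l_k^2 p_k / (σ^2 + M l_k^2 p_k e^{−v*}). Then for all v ≥ 0, R(v) ≥ R(v*), where R(v) = ∑_k log₂(1 + M l_k^2 p_k / (e^v σ^2)) + M·log₂(e)·(v − 1 + e^{−v}). That is, the fixed point v* minimizes R over v ≥ 0. -/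
open Real Finset

/-- Tangent-line bound for the convex function `t ↦ log (1 + b e^{-t})`. -/
lemma log_tangent_aux {b : ℝ} (hb : 0 ≤ b) (t : ℝ) :
    Real.log (1 + b) - b / (1 + b) * t ≤ Real.log (1 + b * Real.exp (-t)) := by
  have h1b : (0:ℝ) < 1 + b := by linarith
  have hw1 : (0:ℝ) ≤ 1 / (1 + b) := by positivity
  have hw2 : (0:ℝ) ≤ b / (1 + b) := by positivity
  have hw : 1 / (1 + b) + b / (1 + b) = 1 := by field_simp
  have hgm := Real.geom_mean_le_arith_mean2_weighted hw1 hw2 zero_le_one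
      (Real.exp_pos (-t)).le hw
  have hlhs : (1:ℝ) ^ (1 / (1 + b)) * Real.exp (-t) ^ (b / (1 + b))
      = Real.exp (-t * (b / (1 + b))) := by
    rw [Real.one_rpow, one_mul, ← Real.exp_mul]
  have hrhs : 1 / (1 + b) * 1 + b / (1 + b) * Real.exp (-t)
      = (1 + b * Real.exp (-t)) / (1 + b) := by field_simp
  rw [hlhs, hrhs] at hgm
  have hpos : (0:ℝ) < 1 + b * Real.exp (-t) := by positivity
  have hlog := Real.log_le_log (Real.exp_pos _) hgm
  rw [Real.log_exp, Real.log_div hpos.ne' h1b.ne'] at hlog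
  linarith

/-- The fixed point of the slack equation minimizes the approximate rate
`R(v)` over `v ≥ 0`. -/
theorem fixed_point_minimizes_rate
    (K : ℕ) (M : ℕ) (hM : 1 ≤ M) (σ : ℝ) (hσ : 0 < σ)
    (l : Fin K → ℝ) (hl : ∀ k, 0 < l k)
    (p : Fin K → ℝ) (hp : ∀ k, 0 ≤ p k)
    (R : ℝ → ℝ)
    (hR : ∀ v, R v =
      (∑ k, Real.logb 2 (1 + M * l k ^ 2 * p k / (Real.exp v * σ ^ 2))) +
        M * Real.logb 2 (Real.exp 1) * (v - 1 + Real.exp (-v)))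
    (vstar : ℝ) (hvstar : 0 ≤ vstar)
    (hfix : Real.exp vstar =
      1 + ∑ k, (l k ^ 2 * p k) /
        (σ ^ 2 + M * l k ^ 2 * p k * Real.exp (-vstar))) :
    ∀ v ≥ (0 : ℝ), R vstar ≤ R v := by
  intro v _
  have hlog2 : (0:ℝ) < Real.log 2 := Real.log_pos one_lt_two
  -- rewrite R in terms of natural log
  have hR' : ∀ w, R w =
      ((∑ k, Real.log (1 + M * l k ^ 2 * p k / (Real.exp w * σ ^ 2))) +
        M * (w - 1 + Real.exp (-w))) / Real.log 2 := by
    intro w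
    rw [hR]
    simp only [Real.logb, Real.log_exp]
    rw [add_div, Finset.sum_div]
    congr 1
    ring
  rw [hR' v, hR' vstar]
  have hE : (0:ℝ) < Real.exp (-vstar) := Real.exp_pos _
  set E := Real.exp (-vstar) with hEdef
  set t := v - vstar with htdef
  -- slope coefficients
  set b : Fin K → ℝ := fun k => M * l k ^ 2 * p k / (Real.exp vstar * σ ^ 2) with hbdef
  have hb0 : ∀ k, 0 ≤ b k := fun k => by
    have := hp k; have := (hl k).le; positivity
  -- per-index argument identity
  have harg : ∀ k, 1 + M * l k ^ 2 * p k / (Real.exp v * σ ^ 2)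
      = 1 + b k * Real.exp (-t) := by
    intro k
    have hev : Real.exp v = Real.exp vstar * Real.exp t := by
      rw [← Real.exp_add]; congr 1; rw [htdef]; ring
    have hit : Real.exp (-t) = (Real.exp t)⁻¹ := Real.exp_neg t
    rw [hbdef]
    simp only
    rw [hit, hev]
    field_simp
  -- per-index tangent bound
  have hper : ∀ k ∈ Finset.univ,
      Real.log (1 + M * l k ^ 2 * p k / (Real.exp vstar * σ ^ 2))
        - b k / (1 + b k) * t
      ≤ Real.log (1 + M * l k ^ 2 * p k / (Real.exp v * σ ^ 2)) := by
    intro k _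
    rw [harg k]
    exact log_tangent_aux (hb0 k) t
  have hsum := Finset.sum_le_sum hper
  rw [Finset.sum_sub_distrib, ← Finset.sum_mul] at hsum
  -- compute the slope sum using the fixed point equation
  have hslope : ∑ k, b k / (1 + b k) = M * (1 - E) := by
    have hEinv : E = (Real.exp vstar)⁻¹ := by
      rw [hEdef, Real.exp_neg]
    have hstep : ∀ k, b k / (1 + b k)
        = M * E * (l k ^ 2 * p k / (σ ^ 2 + M * l k ^ 2 * p k * E)) := by
      intro k
      have hD : (0:ℝ) < σ ^ 2 + M * l k ^ 2 * p k * E := by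
        have := hp k; have := (hl k).le; positivity
      rw [hbdef, hEinv]
      have hev : (0:ℝ) < Real.exp vstar := Real.exp_pos _
      rw [hEinv] at hD
      have d1 : (M:ℝ) * l k ^ 2 * p k + Real.exp vstar * σ ^ 2 ≠ 0 := by
        have := hp k; have := (hl k).le; positivity
      have d2 : (M:ℝ) * l k ^ 2 * p k * Real.exp vstar
          + Real.exp vstar ^ 2 * σ ^ 2 ≠ 0 := by
        have := hp k; have := (hl k).le; positivity
      have hpk := hp k
      have hlk := (hl k).le
      field_simp [d1, d2]
    rw [Finset.sum_congr rfl fun k _ => hstep k, ← Finset.mul_sum]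
    have hfix' : ∑ k, l k ^ 2 * p k / (σ ^ 2 + M * l k ^ 2 * p k * E)
        = Real.exp vstar - 1 := by
      rw [hEdef]; linarith [hfix]
    rw [hfix']
    have : E * Real.exp vstar = 1 := by
      rw [hEdef, ← Real.exp_add]; simp
    nlinarith
  rw [hslope] at hsum
  -- tangent bound for the exponential term
  have htang : 1 - t ≤ Real.exp (-t) := by
    have := Real.add_one_le_exp (-t); linarith
  have hexpv : Real.exp (-v) = E * Real.exp (-t) := by
    rw [hEdef, ← Real.exp_add]; congr 1; rw [htdef]; ring
  have hMpos : (0:ℝ) ≤ (M:ℝ) * E := by positivity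
  have h2 : (M:ℝ) * E * (1 - t) ≤ (M:ℝ) * E * Real.exp (-t) :=
    mul_le_mul_of_nonneg_left htang hMpos
  -- combine
  rw [div_le_div_iff_of_pos_right hlog2]
  rw [hexpv]
  have h3 : (M:ℝ) * v = M * vstar + M * t := by rw [htdef]; ring
  nlinarith [hsum, h2, h3]
end

section
/- Under the hypotheses of the previous statement, the following two constraint systems on (p, τ) are equivalent, where x u g ∈ {0,1} and T ≥ 0 are fixed: (i) for all (n,u): ∑_g x u g · T · R(p_g, v*_{u,g}) ≥ τ, where each v*_{u,g} ≥ 0 satisfies the fixed-point equation e^{v} = 1 + ∑_k l_k^2 p_{g,k}/(σ^2 + M l_k^2 p_{g,k} e^{−v}); and (ii) for all (n,u) and for all v_{u,g} ≥ 0: ∑_g x u g · T · R(p_g, v_{u,g}) ≥ τ together with v_{u,g} ≥ 0. That is, (p, τ) is feasible for (i) iff (p, τ) satisfies ∑_g x u g · T · (min over v ≥ 0 of R(p_g, v)) ≥ τ for all u. -/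
open Real Finset Set

section aux

lemma hasDerivAt_logterm (a v : ℝ) (ha : 0 ≤ a) :
    HasDerivAt (fun v => Real.log (1 + a * Real.exp (-v)))
      (-(a / (Real.exp v + a))) v := by
  have hpos : 0 < 1 + a * Real.exp (-v) := by positivity
  have h0 : HasDerivAt (fun v : ℝ => Real.exp (-v)) (-Real.exp (-v)) v := by
    simpa [Function.comp_def] using (Real.hasDerivAt_exp (-v)).comp v (hasDerivAt_neg v)
  have h1 : HasDerivAt (fun v => 1 + a * Real.exp (-v)) (a * -Real.exp (-v)) v :=
    (h0.const_mul a).const_add 1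
  have h2 := h1.log (ne_of_gt hpos)
  convert h2 using 1
  have he : Real.exp v ≠ 0 := (Real.exp_pos v).ne'
  have hd : (0:ℝ) < Real.exp v + a := by positivity
  rw [Real.exp_neg]
  field_simp

/-- Key lemma: the fixed point `w` minimizes the convex function. -/
lemma fixedpoint_min (K : ℕ) (M : ℝ) (hM : 0 ≤ M)
    (a : Fin K → ℝ) (ha : ∀ k, 0 ≤ a k)
    (w : ℝ)
    (hfixw : M * (1 - Real.exp (-w)) = ∑ k, a k / (Real.exp w + a k))
    (v : ℝ) :
    (∑ k, Real.log (1 + a k * Real.exp (-w))) + M * (w - 1 + Real.exp (-w)) ≤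
    (∑ k, Real.log (1 + a k * Real.exp (-v))) + M * (v - 1 + Real.exp (-v)) := by
  set g : ℝ → ℝ := fun v =>
    (∑ k, Real.log (1 + a k * Real.exp (-v))) + M * (v - 1 + Real.exp (-v)) with hg
  set φ : ℝ → ℝ := fun v =>
    (∑ k, -(a k / (Real.exp v + a k))) + M * (1 - Real.exp (-v)) with hφ
  have hexp : ∀ v : ℝ, HasDerivAt (fun v : ℝ => Real.exp (-v)) (-Real.exp (-v)) v := by
    intro v
    simpa [Function.comp_def] using (Real.hasDerivAt_exp (-v)).comp v (hasDerivAt_neg v)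
  have hderiv : ∀ v : ℝ, HasDerivAt g (φ v) v := by
    intro v
    have hsum : HasDerivAt (fun v => ∑ k, Real.log (1 + a k * Real.exp (-v)))
        (∑ k, -(a k / (Real.exp v + a k))) v :=
      HasDerivAt.fun_sum (fun k _ => hasDerivAt_logterm (a k) v (ha k))
    have h2 : HasDerivAt (fun v : ℝ => M * (v - 1 + Real.exp (-v)))
        (M * (1 - Real.exp (-v))) v := by
      have : HasDerivAt (fun v : ℝ => v - 1 + Real.exp (-v)) (1 - Real.exp (-v)) v := by
        have := ((hasDerivAt_id v).sub_const 1).add (hexp v)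
        simpa [sub_eq_add_neg, Pi.add_def] using this
      exact this.const_mul M
    exact hsum.add h2
  have hmono : Monotone φ := by
    intro v₁ v₂ h
    have h1 : ∀ k, -(a k / (Real.exp v₁ + a k)) ≤ -(a k / (Real.exp v₂ + a k)) := by
      intro k
      have hd1 : (0:ℝ) < Real.exp v₁ + a k := by have := ha k; positivity
      have hd2 : (0:ℝ) < Real.exp v₂ + a k := by have := ha k; positivity
      have : a k / (Real.exp v₂ + a k) ≤ a k / (Real.exp v₁ + a k) :=
        div_le_div_of_nonneg_left (ha k) hd1 (by
          have := Real.exp_le_exp.2 h; linarith) |>.trans_eq rfl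
      linarith
    have h2 : M * (1 - Real.exp (-v₁)) ≤ M * (1 - Real.exp (-v₂)) := by
      have : Real.exp (-v₂) ≤ Real.exp (-v₁) := Real.exp_le_exp.2 (by linarith)
      nlinarith
    exact add_le_add (Finset.sum_le_sum fun k _ => h1 k) h2
  have hφw : φ w = 0 := by
    simp only [hφ]
    rw [Finset.sum_neg_distrib]
    linarith [hfixw]
  have hdiff : Differentiable ℝ g := fun v => (hderiv v).differentiableAt
  rcases le_total v w with hvw | hwv
  · have : AntitoneOn g (Set.Iic w) := by
      apply antitoneOn_of_deriv_nonpos (convex_Iic w) hdiff.continuous.continuousOn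
        (fun x _ => (hdiff x).differentiableWithinAt)
      intro x hx
      rw [(hderiv x).deriv]
      rw [interior_Iic] at hx
      have : φ x ≤ φ w := hmono (le_of_lt hx)
      linarith
    exact this (Set.mem_Iic.2 hvw) (Set.mem_Iic.2 le_rfl) hvw
  · have : MonotoneOn g (Set.Ici w) := by
      apply monotoneOn_of_deriv_nonneg (convex_Ici w) hdiff.continuous.continuousOn
        (fun x _ => (hdiff x).differentiableWithinAt)
      intro x hx
      rw [(hderiv x).deriv]
      rw [interior_Ici] at hx
      have : φ w ≤ φ x := hmono (le_of_lt hx)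
      linarith
    exact this (Set.mem_Ici.2 le_rfl) (Set.mem_Ici.2 hwv) hwv

end aux

/-- Theorem 3: with the slack variables at their fixed points, the rate
lower-bound constraints are equivalent to requiring the bound for all
nonnegative slack values. -/
theorem constraint_systems_equivalent
    (U G K : ℕ) (M : ℕ) (hM : 1 ≤ M) (σ : ℝ) (hσ : 0 < σ)
    (l : Fin K → ℝ) (hl : ∀ k, 0 < l k)
    (x : Fin U → Fin G → ℝ) (hx01 : ∀ u g, x u g = 0 ∨ x u g = 1)
    (T : ℝ) (hT : 0 ≤ T)
    (p : Fin G → Fin K → ℝ) (hp : ∀ g k, 0 ≤ p g k)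
    (R : (Fin K → ℝ) → ℝ → ℝ)
    (hR : ∀ q v, R q v =
      (∑ k, Real.logb 2 (1 + M * l k ^ 2 * q k / (Real.exp v * σ ^ 2))) +
        M * Real.logb 2 (Real.exp 1) * (v - 1 + Real.exp (-v)))
    (vstar : Fin U → Fin G → ℝ) (hvstar : ∀ u g, 0 ≤ vstar u g)
    (hfix : ∀ u g, Real.exp (vstar u g) =
      1 + ∑ k, (l k ^ 2 * p g k) /
        (σ ^ 2 + M * l k ^ 2 * p g k * Real.exp (-(vstar u g))))
    (τ : ℝ) :
    (∀ u : Fin U, τ ≤ ∑ g, x u g * T * R (p g) (vstar u g)) ↔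
    (∀ u : Fin U, ∀ v : Fin G → ℝ, (∀ g, 0 ≤ v g) →
      τ ≤ ∑ g, x u g * T * R (p g) (v g)) := by
  have hσ2 : (0:ℝ) < σ ^ 2 := by positivity
  have key : ∀ (u : Fin U) (g : Fin G) (v : ℝ),
      R (p g) (vstar u g) ≤ R (p g) v := by
    intro u g v
    set a : Fin K → ℝ := fun k => (M:ℝ) * l k ^ 2 * p g k / σ ^ 2 with ha_def
    have ha : ∀ k, 0 ≤ a k := by
      intro k
      have h1 := (hl k).le
      have h2 := hp g k
      have : (0:ℝ) ≤ (M:ℝ) := Nat.cast_nonneg M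
      positivity
    have hterm : ∀ (k : Fin K) (w : ℝ),
        (M:ℝ) * l k ^ 2 * p g k / (Real.exp w * σ ^ 2) = a k * Real.exp (-w) := by
      intro k w
      have he : Real.exp w ≠ 0 := (Real.exp_pos w).ne'
      rw [ha_def, Real.exp_neg]
      field_simp
    have hRform : ∀ w : ℝ, R (p g) w =
        ((∑ k, Real.log (1 + a k * Real.exp (-w))) +
          (M:ℝ) * (w - 1 + Real.exp (-w))) / Real.log 2 := by
      intro w
      rw [hR]
      simp only [hterm, Real.logb, Real.log_exp]
      rw [add_div, Finset.sum_div]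
      ring
    rw [hRform, hRform]
    have hlog2 : (0:ℝ) < Real.log 2 := Real.log_pos (by norm_num)
    apply div_le_div_of_nonneg_right ?_ hlog2.le
    -- translate the fixed-point hypothesis
    have hw := hfix u g
    have hfixw : (M:ℝ) * (1 - Real.exp (-(vstar u g))) =
        ∑ k, a k / (Real.exp (vstar u g) + a k) := by
      have he : Real.exp (vstar u g) ≠ 0 := (Real.exp_pos _).ne'
      have h1 : (M:ℝ) * (1 - Real.exp (-(vstar u g))) =
          Real.exp (-(vstar u g)) * (M:ℝ) * (Real.exp (vstar u g) - 1) := by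
        rw [Real.exp_neg]; field_simp
      have hS : Real.exp (vstar u g) - 1 =
          ∑ k, l k ^ 2 * p g k /
            (σ ^ 2 + (M:ℝ) * l k ^ 2 * p g k * Real.exp (-(vstar u g))) := by
        rw [hw]; ring
      rw [h1, hS, Finset.mul_sum]
      apply Finset.sum_congr rfl
      intro k _
      have hlk := hl k
      have hpk := hp g k
      have hMnn : (0:ℝ) ≤ (M:ℝ) := Nat.cast_nonneg M
      have hB : (0:ℝ) < σ ^ 2 + (M:ℝ) * l k ^ 2 * p g k * Real.exp (-(vstar u g)) := by
        positivity
      have hC : (0:ℝ) < Real.exp (vstar u g) + a k := by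
        have := ha k; positivity
      have hstep : Real.exp (-(vstar u g)) * (M:ℝ) *
          (l k ^ 2 * p g k /
            (σ ^ 2 + (M:ℝ) * l k ^ 2 * p g k * Real.exp (-(vstar u g)))) =
          (Real.exp (-(vstar u g)) * (M:ℝ) * (l k ^ 2 * p g k)) /
            (σ ^ 2 + (M:ℝ) * l k ^ 2 * p g k * Real.exp (-(vstar u g))) := by
        ring
      rw [hstep, div_eq_div_iff hB.ne' hC.ne']
      simp only [ha_def]
      rw [Real.exp_neg]
      field_simp
    exact fixedpoint_min K (M:ℝ) (Nat.cast_nonneg M) a ha (vstar u g) hfixw v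
  constructor
  · intro h u v hv
    refine (h u).trans (Finset.sum_le_sum fun g _ => ?_)
    have hxnn : 0 ≤ x u g * T := by
      rcases hx01 u g with h0 | h1
      · simp [h0]
      · simp [h1, hT]
    exact mul_le_mul_of_nonneg_left (key u g (v g)) hxnn
  · intro h u
    exact h u (vstar u) (hvstar u)
end
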